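/- arXiv:2310.20179 — 2 statements merged into one kernel-verified Lean document; each statement's English description precedes it below -/
import Mathlib

section
/- Let s ≥ 1 be an integer, q = 2^s, m ≥ 3 an odd integer, and n = q^m − 1. Then for each i ∈ {0,1}, the extended code of C_{(q,m;i)}, namely the subspace {(c_0,…,c_{n−1}, −Σ_{j=0}^{n−1} c_j) : (c_0,…,c_{n−1}) ∈ C_{(q,m;i)}} of F^{n+1}, is self-dual: it equals its own dual with respect to the standard bilinear form ⟨u,v⟩ = Σ_k u_k v_k on F^{n+1}. -/
open Finset

/-- The `q`-weight of a nonnegative integer: the sum of its base-`q` digits. -/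
def qWeight (q i : ℕ) : ℕ := (Nat.digits q i).sum

/-- The set `T_{(q,m;j)} = {i : 1 ≤ i ≤ q^m − 2, wt_q(i) ≡ j (mod 2)}`. -/
def Tset (q m j : ℕ) : Set ℕ :=
  {i | 1 ≤ i ∧ i ≤ q ^ m - 2 ∧ qWeight q i % 2 = j}

/-- The cyclic code of length `n` over `F` with defining set `T` with respect to `β ∈ E`:
all words `(c_0, …, c_{n-1})` with `∑_j c_j β^{k j} = 0` for every `k ∈ T`. -/
def cyclicCode (F E : Type*) [Field F] [Field E] [Algebra F E]
    (n : ℕ) (β : E) (T : Set ℕ) : Submodule F (Fin n → F) where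
  carrier := {c | ∀ k ∈ T, ∑ j : Fin n, algebraMap F E (c j) * β ^ (k * (j : ℕ)) = 0}
  add_mem' := by
    intro a b ha hb k hk
    simp only [Set.mem_setOf_eq, Pi.add_apply, map_add, add_mul] at *
    rw [Finset.sum_add_distrib, ha k hk, hb k hk, add_zero]
  zero_mem' := by
    intro k hk
    simp
  smul_mem' := by
    intro r c hc k hk
    simp only [Set.mem_setOf_eq, Pi.smul_apply, smul_eq_mul, map_mul, mul_assoc] at *
    rw [← Finset.mul_sum, hc k hk, mul_zero]

/-- The minimum distance of a code: the least Hamming weight of a nonzero codeword. -/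
noncomputable def minDist {F : Type*} [Field F] [DecidableEq F] {n : ℕ}
    (C : Submodule F (Fin n → F)) : ℕ :=
  sInf {w | ∃ c ∈ C, c ≠ 0 ∧ hammingNorm c = w}

/-- The dual of a set of words: all words orthogonal (for the standard bilinear form)
to every word of the set. -/
def dualSet {F : Type*} [Field F] {N : ℕ} (C : Set (Fin N → F)) : Set (Fin N → F) :=
  {u | ∀ v ∈ C, ∑ k : Fin N, u k * v k = 0}

/-- The extended code of a code `C` of length `n`: each codeword is extended by the
coordinate `c_∞ = -∑_j c_j`. -/
def extendedCode {F : Type*} [Field F] {n : ℕ} (C : Set (Fin n → F)) :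
    Set (Fin (n + 1) → F) :=
  {x | ∃ c ∈ C, x = Fin.snoc c (-(∑ j : Fin n, c j))}


section AuxLemmas
open Polynomial


lemma qW_zero (q : ℕ) : qWeight q 0 = 0 := by simp [qWeight]

lemma qW_mul_add {q : ℕ} (hq : 2 ≤ q) (a b : ℕ) (hb : b < q) :
    qWeight q (q * a + b) = b + qWeight q a := by
  rcases Nat.eq_zero_or_pos (q * a + b) with h | h
  · have ha : a = 0 := by
      rcases Nat.eq_zero_or_pos a with h' | h'
      · exact h'
      · exfalso; nlinarith
    have hb0 : b = 0 := by omega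
    simp [ha, hb0, qW_zero]
  · unfold qWeight
    rw [Nat.digits_def' (by omega : 1 < q) h]
    have h1 : (q * a + b) % q = b := by
      rw [Nat.mul_add_mod]; exact Nat.mod_eq_of_lt hb
    have h2 : (q * a + b) / q = a := by
      rw [Nat.mul_add_div (by omega), Nat.div_eq_of_lt hb, add_zero]
    rw [h1, h2, List.sum_cons]

lemma qW_split {q : ℕ} (hq : 2 ≤ q) (r : ℕ) :
    qWeight q r = r % q + qWeight q (r / q) := by
  have := qW_mul_add hq (r / q) (r % q) (Nat.mod_lt _ (by omega))
  rwa [Nat.div_add_mod] at this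

lemma qW_compl {q : ℕ} (hq : 2 ≤ q) : ∀ m k, k ≤ q ^ m - 1 →
    qWeight q k + qWeight q (q ^ m - 1 - k) = m * (q - 1) := by
  intro m
  induction m with
  | zero => intro k hk; simp at hk; simp [hk, qW_zero]
  | succ m ih =>
    intro k hk
    have hqm : 1 ≤ q ^ m := Nat.one_le_pow _ _ (by omega)
    have hd : k % q < q := Nat.mod_lt _ (by omega)
    have hkd := Nat.div_add_mod k q
    have hp : q ^ (m+1) = q * q ^ m := by ring
    rw [hp] at hk ⊢
    have hA : 1 ≤ q * q ^ m := Nat.mul_pos (by omega) hqm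
    have hk' : k / q ≤ q ^ m - 1 := by
      have h1 : k < q * q ^ m := by omega
      have h2 : k / q < q ^ m := Nat.div_lt_of_lt_mul h1
      omega
    have P1 : q * (q ^ m - 1 - k / q) + q * (1 + k / q) = q * q ^ m := by
      rw [← Nat.mul_add]; congr 1; omega
    have P2 : q * (1 + k / q) = q + q * (k / q) := by ring
    have h2 : q * q ^ m - 1 - k = q * (q ^ m - 1 - k / q) + (q - 1 - k % q) := by omega
    have h1 : k = q * (k / q) + k % q := by omega
    rw [h2, qW_mul_add hq _ _ (by omega)]
    nth_rewrite 1 [h1]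
    rw [qW_mul_add hq _ _ hd]
    have := ih (k / q) hk'
    have hr : (m+1) * (q-1) = m * (q-1) + (q-1) := by ring
    omega

lemma qW_pow_add {q : ℕ} (hq : 2 ≤ q) : ∀ t r d, r < q ^ t → d < q →
    qWeight q (q ^ t * d + r) = d + qWeight q r := by
  intro t
  induction t with
  | zero => intro r d hr hd
            have hr0 : r = 0 := by simp at hr; omega
            subst hr0
            simpa [qW_zero] using qW_mul_add hq 0 d hd
  | succ t ih =>
    intro r d hr hd
    have hq0 : 0 < q := by omega
    have h1 : q ^ (t+1) * d + r = q * (q ^ t * d + r / q) + r % q := by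
      have : q * (q ^ t * d) = q ^ (t+1) * d := by ring
      have := Nat.div_add_mod r q
      have e2 : q * (q ^ t * d + r / q) = q * (q ^ t * d) + q * (r / q) := by ring
      omega
    have hrq : r / q < q ^ t := by
      apply Nat.div_lt_of_lt_mul; rw [← pow_succ']; exact hr
    rw [h1, qW_mul_add hq _ _ (Nat.mod_lt _ hq0), ih _ _ hrq hd, qW_split hq r]
    omega

lemma qW_shift {q t : ℕ} (hq : 2 ≤ q) (k : ℕ) (hk1 : 1 ≤ k) (hk2 : k ≤ q ^ (t+1) - 2) :
    1 ≤ (q * k) % (q ^ (t+1) - 1) ∧ (q * k) % (q ^ (t+1) - 1) ≤ q ^ (t+1) - 2 ∧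
    qWeight q ((q * k) % (q ^ (t+1) - 1)) = qWeight q k := by
  have hqt : 1 ≤ q ^ t := Nat.one_le_pow _ _ (by omega)
  have hA : q ^ (t+1) = q ^ t * q := pow_succ q t
  rw [hA] at hk2 ⊢
  have hA1 : 1 * 2 ≤ q ^ t * q := Nat.mul_le_mul hqt hq
  obtain ⟨d, r, e0, hr⟩ : ∃ d r, q ^ t * d + r = k ∧ r < q ^ t :=
    ⟨k / q ^ t, k % q ^ t, Nat.div_add_mod k _, Nat.mod_lt _ (by omega)⟩
  have hd : d < q := by
    have h1 : q ^ t * d < q ^ t * q := by omega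
    exact Nat.lt_of_mul_lt_mul_left h1
  have e1 : q * k = (q ^ t * q) * d + q * r := by rw [← e0]; ring
  have e2 : (q ^ t * q - 1) * d + d = (q ^ t * q) * d := by
    have h5 : 1 * d ≤ (q ^ t * q) * d := Nat.mul_le_mul_right d (by omega)
    rw [Nat.sub_mul]; omega
  have key : q * k = (q * r + d) + (q ^ t * q - 1) * d := by omega
  have e3 : r + 1 ≤ q ^ t → q * r + q ≤ q ^ t * q := by
    intro h
    have h6 : q * (r+1) ≤ q * q ^ t := Nat.mul_le_mul_left q h
    have e4 : q * (r+1) = q * r + q := by ring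
    have e5 : q * q ^ t = q ^ t * q := by ring
    omega
  have e8 : r + 2 ≤ q ^ t → q * r + 2 * q ≤ q ^ t * q := by
    intro h
    have h6 : q * (r+2) ≤ q * q ^ t := Nat.mul_le_mul_left q h
    have e4 : q * (r+2) = q * r + 2 * q := by ring
    have e5 : q * q ^ t = q ^ t * q := by ring
    omega
  have e7 : q ^ t * (q - 1) + q ^ t = q ^ t * q := by
    rw [← Nat.mul_succ]; congr 1; omega
  have hbound : q * r + d ≤ q ^ t * q - 2 := by
    rcases Nat.lt_or_ge d (q - 1) with h | h
    · have := e3 (by omega); omega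
    · have hdq : d = q - 1 := by omega
      rcases Nat.lt_or_ge r (q ^ t - 1) with h' | h' 
      · have := e8 (by omega); omega
      · exfalso
        have e9 : q ^ t * d = q ^ t * (q - 1) := by rw [hdq]
        omega
  have hm : (q * k) % (q ^ t * q - 1) = q * r + d := by
    rw [key, Nat.add_mul_mod_self_left]
    exact Nat.mod_eq_of_lt (by omega)
  have hpos : 1 ≤ q * r + d := by
    rcases Nat.eq_zero_or_pos d with hd0 | hd0
    · rcases Nat.eq_zero_or_pos r with hr0 | hr0
      · exfalso
        have hz : q ^ t * d = 0 := by rw [hd0, mul_zero]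
        omega
      · have h7 : 1 * 1 ≤ q * r := Nat.mul_le_mul (by omega) hr0
        omega
    · omega
  rw [hm]
  refine ⟨by omega, by omega, ?_⟩
  rw [qW_mul_add hq r d hd, ← e0, qW_pow_add hq t r d hr hd]

lemma myCharTwo {K : Type*} [Field K] [Fintype K] {s : ℕ} (hs : 1 ≤ s)
    (hK : Fintype.card K = 2 ^ s) : CharP K 2 := by
  have hp : (ringChar K).Prime := CharP.char_is_prime K (ringChar K)
  obtain ⟨k, -, hcard⟩ := FiniteField.card K (ringChar K)
  have h2 : ringChar K ∣ 2 ^ s := by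
    rw [← hK, hcard]
    exact dvd_pow_self _ (by exact_mod_cast k.ne_zero)
  have : ringChar K = 2 :=
    (Nat.prime_dvd_prime_iff_eq hp Nat.prime_two).mp (hp.dvd_of_dvd_pow h2)
  exact ringChar.of_eq this

lemma geom_zero' {E : Type*} [Field E] (x : E) (n : ℕ) (hxn : x ^ n = 1) (hx : x ≠ 1) :
    ∑ i ∈ range n, x ^ i = 0 := by
  have h := geom_sum_mul x n
  rw [hxn, sub_self] at h
  exact (mul_eq_zero.mp h).resolve_right (sub_ne_zero.mpr hx)

lemma frob_fixed_mem {F E : Type*} [Field F] [Fintype F] [Field E] [Algebra F E]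
    {q : ℕ} (hq2 : 2 ≤ q) (hF : Fintype.card F = q) {z : E} (hz : z ^ q = z) :
    ∃ a : F, algebraMap F E a = z := by
  classical
  set P : E[X] := X ^ q - X with hP
  have hdeg : P.natDegree = q := by
    have h1 : (X : E[X]).natDegree < (X ^ q : E[X]).natDegree := by
      rw [natDegree_X_pow, natDegree_X]; omega
    rw [hP, natDegree_sub_eq_left_of_natDegree_lt h1, natDegree_X_pow]
  have hP0 : P ≠ 0 := by
    intro h0
    rw [h0, natDegree_zero] at hdeg; omega
  have hroot : ∀ y : E, y ^ q = y → y ∈ P.roots := by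
    intro y hy
    rw [mem_roots hP0]
    simp [hP, IsRoot, hy]
  have himg : ∀ a : F, (algebraMap F E a) ∈ P.roots := by
    intro a
    apply hroot
    rw [← map_pow]
    congr 1
    rw [← hF]
    exact FiniteField.pow_card a
  set img : Finset E := Finset.univ.image (algebraMap F E) with himgdef
  have hcard : img.card = q := by
    rw [himgdef, Finset.card_image_of_injective _ (algebraMap F E).injective,
      Finset.card_univ, hF]
  have hsub : img ⊆ P.roots.toFinset := by
    intro x hx
    rw [himgdef, Finset.mem_image] at hx
    obtain ⟨a, -, rfl⟩ := hx
    exact Multiset.mem_toFinset.mpr (himg a)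
  have heq : img = P.roots.toFinset := by
    apply Finset.eq_of_subset_of_card_le hsub
    calc P.roots.toFinset.card ≤ Multiset.card P.roots := Multiset.toFinset_card_le _
      _ ≤ P.natDegree := card_roots' P
      _ = img.card := by rw [hdeg, hcard]
  have hzmem : z ∈ img := by
    rw [heq]
    exact Multiset.mem_toFinset.mpr (hroot z hz)
  rw [himgdef, Finset.mem_image] at hzmem
  obtain ⟨a, -, ha⟩ := hzmem
  exact ⟨a, ha⟩

lemma exists_trace_ne_zero {E : Type*} [Field E] [Fintype E] {q m : ℕ}
    (hq2 : 2 ≤ q) (hm : 1 ≤ m) (hE : Fintype.card E = q ^ m) :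
    ∃ α : E, ∑ t ∈ range m, α ^ q ^ t ≠ 0 := by
  classical
  by_contra h
  push_neg at h
  set P : E[X] := ∑ t ∈ range m, X ^ q ^ t with hP
  have hco : P.coeff (q ^ (m-1)) = 1 := by
    rw [hP, finset_sum_coeff]
    have : ∀ t ∈ range m, (X ^ q ^ t : E[X]).coeff (q ^ (m-1)) =
        if t = m - 1 then 1 else 0 := by
      intro t ht
      rw [coeff_X_pow]
      congr 1
      simp only [eq_iff_iff]
      constructor
      · intro he; exact Nat.pow_right_injective hq2 he.symm
      · intro he; rw [he]
    rw [Finset.sum_congr rfl this, Finset.sum_ite_eq' (range m) (m-1)]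
    simp [Finset.mem_range]; omega
  have hP0 : P ≠ 0 := by
    intro h0; rw [h0, coeff_zero] at hco; exact one_ne_zero hco.symm
  have hdeg : P.natDegree ≤ q ^ (m-1) := by
    rw [hP]
    apply le_trans (natDegree_sum_le _ _)
    rw [Finset.fold_max_le]
    constructor
    · omega
    · intro t ht
      simp only [Function.comp_apply, natDegree_X_pow]
      exact Nat.pow_le_pow_right (by omega) (by simp [Finset.mem_range] at ht; omega)
  have hallroot : (Finset.univ : Finset E) ⊆ P.roots.toFinset := by
    intro α hα
    apply Multiset.mem_toFinset.mpr
    rw [mem_roots hP0]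
    show P.eval α = 0
    rw [hP, eval_finset_sum]
    simpa using h α
  have hcard : q ^ m ≤ q ^ (m-1) := by
    calc q ^ m = Fintype.card E := hE.symm
      _ = (Finset.univ : Finset E).card := (Finset.card_univ).symm
      _ ≤ P.roots.toFinset.card := Finset.card_le_card hallroot
      _ ≤ Multiset.card P.roots := Multiset.toFinset_card_le _
      _ ≤ P.natDegree := card_roots' P
      _ ≤ q ^ (m-1) := hdeg
  have : q ^ (m-1) < q ^ m := Nat.pow_lt_pow_right (by omega) (by omega)
  omega

end AuxLemmas

theorem stmt15 (s q m n : ℕ) (hs : 1 ≤ s) (hq : q = 2 ^ s)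
    (hm : 3 ≤ m) (hmodd : Odd m) (hn : n = q ^ m - 1)
    (F E : Type*) [Field F] [Fintype F] [DecidableEq F] [Field E] [Fintype E] [Algebra F E]
    (hF : Fintype.card F = q) (hE : Fintype.card E = q ^ m)
    (β : E) (hβ : orderOf β = n) :
    ∀ j : ℕ, j = 0 ∨ j = 1 →
      extendedCode (cyclicCode F E n β (Tset q m j) : Set (Fin n → F)) =
        dualSet (extendedCode (cyclicCode F E n β (Tset q m j) : Set (Fin n → F))) := by
  intro j hj
  have hq2 : 2 ≤ q := by
    rw [hq]
    calc 2 = 2 ^ 1 := (pow_one 2).symm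
    _ ≤ 2 ^ s := Nat.pow_le_pow_right (by omega) hs
  have hqm2 : 2 ≤ q ^ m := by
    have : q ≤ q ^ m := Nat.le_self_pow (by omega) q
    omega
  have hn1 : 1 ≤ n := by omega
  have h2q : 2 ∣ q := by rw [hq]; exact dvd_pow_self 2 (by omega)
  have h2qm : 2 ∣ q ^ m := dvd_pow h2q (by omega)
  have hnodd : n % 2 = 1 := by omega
  haveI hcF : CharP F 2 := myCharTwo hs (by rw [hF, hq])
  haveI hcE : CharP E 2 := myCharTwo (s := s * m)
    (Nat.one_le_iff_ne_zero.mpr (by positivity)) (by rw [hE, hq, ← pow_mul])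
  haveI : Fact (Nat.Prime 2) := ⟨Nat.prime_two⟩
  have h2F : (2 : F) = 0 := by
    have := CharP.cast_eq_zero F 2; simpa using this
  have h2E : (2 : E) = 0 := by
    have := CharP.cast_eq_zero E 2; simpa using this
  have hnF : (n : F) = 1 := by
    obtain ⟨t, ht⟩ : ∃ t, n = 2 * t + 1 := ⟨n / 2, by omega⟩
    rw [ht]; push_cast; rw [h2F]; ring
  have hnE : (n : E) = 1 := by
    obtain ⟨t, ht⟩ : ∃ t, n = 2 * t + 1 := ⟨n / 2, by omega⟩
    rw [ht]; push_cast; rw [h2E]; ring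
  have hxF : ∀ a : F, a ^ q = a := fun a => by rw [← hF]; exact FiniteField.pow_card a
  have hxE : ∀ x : E, x ^ q ^ m = x := fun x => by rw [← hE]; exact FiniteField.pow_card x
  have hfrobsum : ∀ (t : ℕ) {ι : Type} (s' : Finset ι) (g : ι → E),
      (∑ i ∈ s', g i) ^ q ^ t = ∑ i ∈ s', g i ^ q ^ t := by
    intro t ι s' g
    have hqt : q ^ t = 2 ^ (s * t) := by rw [hq, ← pow_mul]
    rw [hqt]
    simpa only [iterateFrobenius_def] using map_sum (iterateFrobenius E 2 (s * t)) g s'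
  have hmapfix : ∀ (t : ℕ) (a : F), (algebraMap F E a) ^ q ^ t = algebraMap F E a := by
    intro t a
    induction t with
    | zero => rw [pow_zero, pow_one]
    | succ t ih => rw [pow_succ, pow_mul, ih, ← map_pow, hxF]
  have hTr_fix : ∀ x : E, (∑ t ∈ range m, x ^ q ^ t) ^ q = ∑ t ∈ range m, x ^ q ^ t := by
    intro x
    have h0 : (∑ t ∈ range m, x ^ q ^ t) ^ q = ∑ t ∈ range m, x ^ q ^ (t + 1) := by
      have h' := hfrobsum 1 (range m) (fun t => x ^ q ^ t)
      rw [pow_one] at h'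
      rw [h']
      apply Finset.sum_congr rfl
      intro t _
      rw [← pow_mul, ← pow_succ]
    have h1 := Finset.sum_range_succ' (fun t => x ^ q ^ t) m
    have h2 := Finset.sum_range_succ (fun t => x ^ q ^ t) m
    rw [hxE] at h2
    rw [pow_zero, pow_one] at h1
    rw [h0]
    linear_combination h2 - h1
  have hTr_F : ∀ x : E, ∃ a : F, algebraMap F E a = ∑ t ∈ range m, x ^ q ^ t :=
    fun x => frob_fixed_mem hq2 hF (hTr_fix x)
  have hTr_ne : ∀ z : E, (∀ α : E, ∑ t ∈ range m, (α * z) ^ q ^ t = 0) → z = 0 := by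
    intro z hz
    by_contra h0
    obtain ⟨α₀, hα₀⟩ := exists_trace_ne_zero hq2 (by omega) hE
    apply hα₀
    have h' := hz (α₀ * z⁻¹)
    rwa [mul_assoc, inv_mul_cancel₀ h0, mul_one] at h'
  have hβ1 : β ^ n = 1 := by rw [← hβ]; exact pow_orderOf_eq_one β
  have hβdvd : ∀ t : ℕ, β ^ t = 1 ↔ n ∣ t := fun t => by
    rw [← hβ]; exact (orderOf_dvd_iff_pow_eq_one).symm
  have hgeo : ∀ t : ℕ, ¬ n ∣ t → ∑ i : Fin n, β ^ (t * (i : ℕ)) = 0 := by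
    intro t ht
    rw [Fin.sum_univ_eq_sum_range (fun i => β ^ (t * i)) n]
    calc ∑ i ∈ range n, β ^ (t * i) = ∑ i ∈ range n, (β ^ t) ^ i := by
          apply Finset.sum_congr rfl; intro i _; rw [pow_mul]
    _ = 0 := geom_zero' _ n
          (by rw [← pow_mul, mul_comm, pow_mul, hβ1, one_pow])
          (fun h => ht ((hβdvd t).mp h))
  have hoddmq : (m * (q - 1)) % 2 = 1 :=
    Nat.odd_iff.mp ((Nat.odd_mul).mpr ⟨hmodd, Nat.odd_iff.mpr (by omega)⟩)
  have hflip : ∀ k, 1 ≤ k → k ≤ q ^ m - 2 → qWeight q k % 2 ≠ j →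
      (q ^ m - 1 - k) ∈ Tset q m j := by
    intro k hk1 hk2 hw
    have hwc := qW_compl hq2 m k (by omega)
    refine ⟨by omega, by omega, ?_⟩
    rcases hj with rfl | rfl <;> omega
  have hclos : ∀ l, l ∈ Tset q m j → ∀ t : ℕ, (l * q ^ t) % n ∈ Tset q m j := by
    intro l hl t
    induction t with
    | zero =>
      obtain ⟨h1, h2, h3⟩ := hl
      have hln : l % n = l := Nat.mod_eq_of_lt (by omega)
      rw [pow_zero, mul_one, hln]; exact ⟨h1, h2, h3⟩
    | succ t ih =>
      obtain ⟨h1, h2, h3⟩ := ih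
      have hms : m - 1 + 1 = m := by omega
      have hqn : q % n = q := by
        apply Nat.mod_eq_of_lt
        have h3' : q ^ 3 ≤ q ^ m := Nat.pow_le_pow_right (by omega) hm
        have hq3 : q * 4 ≤ q ^ 3 := by
          have e : q ^ 3 = q * (q * q) := by ring
          have h4 : 4 ≤ q * q := by nlinarith
          rw [e]; exact Nat.mul_le_mul_left q h4
        omega
      have key := qW_shift (q := q) (t := m - 1) hq2 ((l * q ^ t) % n) h1
        (by rw [hms]; exact h2)
      rw [hms, ← hn] at key
      have e : (l * q ^ (t + 1)) % n = (q * ((l * q ^ t) % n)) % n := by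
        rw [pow_succ, ← mul_assoc, Nat.mul_mod, hqn, mul_comm ((l * q ^ t) % n) q]
      rw [e]
      exact ⟨key.1, key.2.1, by rw [key.2.2]; exact h3⟩
  have hx_inv : ∀ (u v : ℕ), v ≤ n → β ^ ((n - v) * u) * β ^ (v * u) = 1 := by
    intro u v hv
    rw [← pow_add, ← add_mul, Nat.sub_add_cancel hv, pow_mul, hβ1, one_pow]
  have hswap : ∀ (b k : ℕ), b ≤ n → k ≤ n → β ^ ((n - k) * b) = β ^ ((n - b) * k) := by
    intro b k hb hk
    have h1 := hx_inv b k hk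
    have h2 := hx_inv k b hb
    rw [mul_comm b k] at h2
    have h1' := eq_inv_of_mul_eq_one_left h1
    have h2' := eq_inv_of_mul_eq_one_left h2
    rw [h1', h2']
  have horth : ∀ a b : Fin n, ∑ k ∈ range n, β ^ (k * (a : ℕ)) * β ^ ((n - k) * (b : ℕ)) =
      if (a : ℕ) = (b : ℕ) then 1 else 0 := by
    intro a b
    have hstep : ∀ k ∈ range n, β ^ (k * (a : ℕ)) * β ^ ((n - k) * (b : ℕ)) =
        (β ^ ((a : ℕ) + (n - (b : ℕ)))) ^ k := by
      intro k hk
      rw [hswap (b : ℕ) k (le_of_lt b.isLt) (le_of_lt (mem_range.mp hk))]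
      have e : k * (a : ℕ) + (n - (b : ℕ)) * k = ((a : ℕ) + (n - (b : ℕ))) * k := by ring
      rw [← pow_add, e, pow_mul]
    rw [Finset.sum_congr rfl hstep]
    by_cases hab : (a : ℕ) = (b : ℕ)
    · rw [if_pos hab]
      have honeb : (β ^ ((a : ℕ) + (n - (b : ℕ)))) = 1 := by
        rw [hab, Nat.add_sub_cancel' (le_of_lt b.isLt), hβ1]
      rw [Finset.sum_congr rfl (fun k _ => by rw [honeb, one_pow]),
        Finset.sum_const, Finset.card_range, nsmul_eq_mul, mul_one, hnE]
    · rw [if_neg hab]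
      apply geom_zero'
      · rw [← pow_mul, mul_comm, pow_mul, hβ1, one_pow]
      · intro h1
        have hdvd := (hβdvd _).mp h1
        have hbn : (b : ℕ) < n := b.isLt
        have han : (a : ℕ) < n := a.isLt
        have hpos : 0 < (a : ℕ) + (n - (b : ℕ)) := by omega
        have hge : n ≤ (a : ℕ) + (n - (b : ℕ)) := Nat.le_of_dvd hpos hdvd
        have hlt : (a : ℕ) + (n - (b : ℕ)) - n < n := by omega
        have := Nat.eq_zero_of_dvd_of_lt (Nat.dvd_sub hdvd dvd_rfl) hlt
        omega
  have hpar : ∀ u v : Fin n → F,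
      algebraMap F E (∑ i : Fin n, u i * v i) =
      ∑ k ∈ range n, (∑ i : Fin n, algebraMap F E (u i) * β ^ (k * (i : ℕ))) *
        (∑ i : Fin n, algebraMap F E (v i) * β ^ ((n - k) * (i : ℕ))) := by
    intro u v
    have h1 : ∀ k ∈ range n, (∑ i : Fin n, algebraMap F E (u i) * β ^ (k * (i : ℕ))) *
        (∑ i : Fin n, algebraMap F E (v i) * β ^ ((n - k) * (i : ℕ))) =
        ∑ i : Fin n, ∑ i' : Fin n, (algebraMap F E (u i) * algebraMap F E (v i')) *
          (β ^ (k * (i : ℕ)) * β ^ ((n - k) * (i' : ℕ))) := by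
      intro k _
      rw [Finset.sum_mul_sum]
      apply Finset.sum_congr rfl; intro i _
      apply Finset.sum_congr rfl; intro i' _
      ring
    rw [Finset.sum_congr rfl h1, Finset.sum_comm]
    have h2 : ∀ i : Fin n, ∑ k ∈ range n, ∑ i' : Fin n,
        (algebraMap F E (u i) * algebraMap F E (v i')) *
          (β ^ (k * (i : ℕ)) * β ^ ((n - k) * (i' : ℕ))) =
        ∑ i' : Fin n, (algebraMap F E (u i) * algebraMap F E (v i')) *
          (if (i : ℕ) = (i' : ℕ) then 1 else 0) := by
      intro i
      rw [Finset.sum_comm]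
      apply Finset.sum_congr rfl; intro i' _
      rw [← Finset.mul_sum, horth i i']
    rw [Finset.sum_congr rfl (fun i _ => h2 i), map_sum]
    apply Finset.sum_congr rfl
    intro i _
    rw [Finset.sum_eq_single i]
    · rw [if_pos rfl, mul_one, map_mul]
    · intro i' _ hne
      rw [if_neg (fun h => hne (Fin.val_injective h).symm), mul_zero]
    · intro habs; exact absurd (Finset.mem_univ i) habs
  have hmemC : ∀ c : Fin n → F, c ∈ cyclicCode F E n β (Tset q m j) ↔
      ∀ k ∈ Tset q m j, ∑ i : Fin n, algebraMap F E (c i) * β ^ (k * (i : ℕ)) = 0 :=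
    fun c => Iff.rfl
  have hTk : ∀ k, k ∈ Tset q m j → ¬ n ∣ k := by
    intro k hk hdvd
    obtain ⟨h1, h2, h3⟩ := hk
    have := Nat.le_of_dvd (by omega) hdvd
    omega
  have honeC : (fun _ : Fin n => (1 : F)) ∈ cyclicCode F E n β (Tset q m j) := by
    rw [hmemC]
    intro k hk
    have := hgeo k (hTk k hk)
    simpa using this
  have hkey : ∀ u' : Fin n → F,
      (∀ c ∈ cyclicCode F E n β (Tset q m j), ∑ i : Fin n, u' i * c i = 0) →
      ∀ l : ℕ, (l = 0 ∨ l ∈ Tset q m j) →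
      ∑ i : Fin n, algebraMap F E (u' i) * β ^ (l * (i : ℕ)) = 0 := by
    intro u' hu' l hl
    apply hTr_ne
    intro α
    choose c hc using fun i : Fin n => hTr_F (α * β ^ (l * (i : ℕ)))
    have hcC : c ∈ cyclicCode F E n β (Tset q m j) := by
      rw [hmemC]
      intro k hk
      obtain ⟨hk1, hk2, hk3⟩ := hk
      calc ∑ i : Fin n, algebraMap F E (c i) * β ^ (k * (i : ℕ))
          = ∑ i : Fin n, ∑ t ∈ range m, α ^ q ^ t * β ^ ((l * q ^ t + k) * (i : ℕ)) := by
            apply Finset.sum_congr rfl; intro i _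
            rw [hc i, Finset.sum_mul]
            apply Finset.sum_congr rfl; intro t _
            rw [mul_pow, ← pow_mul, mul_assoc, ← pow_add,
              show l * (i : ℕ) * q ^ t + k * (i : ℕ) = (l * q ^ t + k) * (i : ℕ) from by ring]
      _ = ∑ t ∈ range m, α ^ q ^ t * ∑ i : Fin n, β ^ ((l * q ^ t + k) * (i : ℕ)) := by
            rw [Finset.sum_comm]
            apply Finset.sum_congr rfl; intro t _
            rw [Finset.mul_sum]
      _ = 0 := by
            apply Finset.sum_eq_zero; intro t _
            have hnd : ¬ n ∣ (l * q ^ t + k) := by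
              intro hdvd
              rcases hl with rfl | hlT
              · rw [zero_mul, zero_add] at hdvd
                have := Nat.le_of_dvd (by omega) hdvd
                omega
              · obtain ⟨hL1, hL2, hL3⟩ := hclos l hlT t
                have hdvd2 : n ∣ (l * q ^ t) % n + k := by
                  have hmeq : (l * q ^ t) % n + k ≡ l * q ^ t + k [MOD n] :=
                    Nat.ModEq.add_right k (Nat.mod_modEq _ n)
                  have h00 : (l * q ^ t + k) ≡ 0 [MOD n] :=
                    Nat.modEq_zero_iff_dvd.mpr hdvd
                  exact Nat.modEq_zero_iff_dvd.mp (hmeq.trans h00)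
                have hLk : (l * q ^ t) % n + k = n := by
                  have hge := Nat.le_of_dvd (by omega) hdvd2
                  have hlt : (l * q ^ t) % n + k - n < n := by omega
                  have := Nat.eq_zero_of_dvd_of_lt (Nat.dvd_sub hdvd2 dvd_rfl) hlt
                  omega
                have hwc := qW_compl hq2 m k (by omega)
                have heq : (l * q ^ t) % n = q ^ m - 1 - k := by omega
                rw [heq] at hL3
                omega
            rw [hgeo (l * q ^ t + k) hnd, mul_zero]
    have h1 : algebraMap F E (∑ i : Fin n, u' i * c i) = 0 := by
      rw [hu' c hcC, map_zero]
    rw [map_sum] at h1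
    calc ∑ t ∈ range m, (α * ∑ i : Fin n, algebraMap F E (u' i) * β ^ (l * (i : ℕ))) ^ q ^ t
        = ∑ t ∈ range m, ∑ i : Fin n, algebraMap F E (u' i) * (α * β ^ (l * (i : ℕ))) ^ q ^ t := by
          apply Finset.sum_congr rfl; intro t _
          rw [mul_pow, hfrobsum t, Finset.mul_sum]
          apply Finset.sum_congr rfl; intro i _
          rw [mul_pow, hmapfix t]
          ring
      _ = ∑ i : Fin n, algebraMap F E (u' i) * ∑ t ∈ range m, (α * β ^ (l * (i : ℕ))) ^ q ^ t := by
          rw [Finset.sum_comm]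
          apply Finset.sum_congr rfl; intro i _
          rw [Finset.mul_sum]
      _ = ∑ i : Fin n, algebraMap F E (u' i * c i) := by
          apply Finset.sum_congr rfl; intro i _
          rw [← hc i, map_mul]
      _ = 0 := h1
  apply Set.Subset.antisymm
  · intro x hx
    obtain ⟨c, hcC, rfl⟩ := hx
    intro y hy
    obtain ⟨c', hc'C, rfl⟩ := hy
    rw [Fin.sum_univ_castSucc]
    simp only [Fin.snoc_castSucc, Fin.snoc_last]
    have hCc := (hmemC c).mp hcC
    have hCc' := (hmemC c').mp hc'C
    have key : ∑ i : Fin n, c i * c' i = (∑ i : Fin n, c i) * (∑ i : Fin n, c' i) := by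
      apply (algebraMap F E).injective
      have hz : ∀ k ∈ range n, k ≠ 0 →
          (∑ i : Fin n, algebraMap F E (c i) * β ^ (k * (i : ℕ))) *
          (∑ i : Fin n, algebraMap F E (c' i) * β ^ ((n - k) * (i : ℕ))) = 0 := by
        intro k hkr hk0
        have hkn : k < n := Finset.mem_range.mp hkr
        by_cases hkT : k ∈ Tset q m j
        · rw [hCc k hkT, zero_mul]
        · have hnk : (q ^ m - 1 - k) ∈ Tset q m j := by
            apply hflip k (by omega) (by omega)
            intro hw; exact hkT ⟨by omega, by omega, hw⟩
          have e3 : n - k = q ^ m - 1 - k := by omega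
          rw [e3, hCc' _ hnk, mul_zero]
      have e1 : ∑ i : Fin n, algebraMap F E (c i) * β ^ (0 * (i : ℕ)) =
          algebraMap F E (∑ i : Fin n, c i) := by
        rw [map_sum]; apply Finset.sum_congr rfl; intro i _; rw [zero_mul, pow_zero, mul_one]
      have e2 : ∑ i : Fin n, algebraMap F E (c' i) * β ^ ((n - 0) * (i : ℕ)) =
          algebraMap F E (∑ i : Fin n, c' i) := by
        rw [map_sum]; apply Finset.sum_congr rfl; intro i _
        rw [Nat.sub_zero, pow_mul, hβ1, one_pow, mul_one]
      rw [hpar c c', Finset.sum_eq_single_of_mem 0 (Finset.mem_range.mpr (by omega)) hz,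
        e1, e2, map_mul]
    rw [neg_mul_neg, key, ← two_mul, h2F, zero_mul]
  · intro u hu
    have hu'perp : ∀ c ∈ cyclicCode F E n β (Tset q m j),
        ∑ i : Fin n, (u (Fin.castSucc i) + u (Fin.last n)) * c i = 0 := by
      intro c hcC
      have hv := hu (Fin.snoc c (-(∑ i : Fin n, c i))) ⟨c, hcC, rfl⟩
      rw [Fin.sum_univ_castSucc] at hv
      simp only [Fin.snoc_castSucc, Fin.snoc_last] at hv
      have expand : ∑ i : Fin n, (u (Fin.castSucc i) + u (Fin.last n)) * c i =
          ∑ i : Fin n, u (Fin.castSucc i) * c i + u (Fin.last n) * ∑ i : Fin n, c i := by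
        rw [Finset.mul_sum, ← Finset.sum_add_distrib]
        apply Finset.sum_congr rfl; intro i _; ring
      rw [expand]
      linear_combination hv + u (Fin.last n) * (∑ i : Fin n, c i) * h2F
    have hU' := hkey _ hu'perp
    have hu'C : (fun i => u (Fin.castSucc i) + u (Fin.last n)) ∈
        cyclicCode F E n β (Tset q m j) := by
      rw [hmemC]; intro k hk; exact hU' k (Or.inr hk)
    have hsum0 : ∑ i : Fin n, (u (Fin.castSucc i) + u (Fin.last n)) = 0 := by
      have h0 := hU' 0 (Or.inl rfl)
      have e : ∑ i : Fin n, algebraMap F E (u (Fin.castSucc i) + u (Fin.last n)) *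
          β ^ (0 * (i : ℕ)) =
          algebraMap F E (∑ i : Fin n, (u (Fin.castSucc i) + u (Fin.last n))) := by
        rw [map_sum]; apply Finset.sum_congr rfl; intro i _; rw [zero_mul, pow_zero, mul_one]
      rw [e] at h0
      exact (map_eq_zero_iff _ (algebraMap F E).injective).mp h0
    have hconstC : (fun _ : Fin n => u (Fin.last n)) ∈ cyclicCode F E n β (Tset q m j) := by
      have hsm := (cyclicCode F E n β (Tset q m j)).smul_mem (u (Fin.last n)) honeC
      convert hsm using 1
      funext i
      simp [Pi.smul_apply, smul_eq_mul]
    have hc0C : (fun i => u (Fin.castSucc i)) ∈ cyclicCode F E n β (Tset q m j) := by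
      have hadd := (cyclicCode F E n β (Tset q m j)).add_mem hu'C hconstC
      convert hadd using 1
      funext i
      show u (Fin.castSucc i) = (u (Fin.castSucc i) + u (Fin.last n)) + u (Fin.last n)
      linear_combination (-(u (Fin.last n))) * h2F
    have hlast : -(∑ i : Fin n, u (Fin.castSucc i)) = u (Fin.last n) := by
      have hsplit : ∑ i : Fin n, (u (Fin.castSucc i) + u (Fin.last n)) =
          ∑ i : Fin n, u (Fin.castSucc i) + (n : F) * u (Fin.last n) := by
        rw [Finset.sum_add_distrib, Finset.sum_const, Finset.card_univ, Fintype.card_fin,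
          nsmul_eq_mul]
      rw [hsplit, hnF, one_mul] at hsum0
      exact neg_eq_of_add_eq_zero_right hsum0
    exact ⟨fun i => u (Fin.castSucc i), hc0C, by
      funext i
      refine Fin.lastCases ?_ ?_ i
      · rw [Fin.snoc_last]; exact hlast.symm
      · intro i'; rw [Fin.snoc_castSucc]⟩
end

section
/- Let s ≥ 1 be an integer, q = 2^s, m ≥ 3 an odd integer, and n = q^m − 1. Then for each i ∈ {0,1}, the code C̃_{(q,m;i)} is self-orthogonal (C̃_{(q,m;i)} ⊆ C̃_{(q,m;i)}^⊥) and has dimension (n−1)/2 as an F-vector space. -/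
open Finset

section AuxLemmas

open Polynomial

lemma qWeight_eq' {q : ℕ} (hq : 2 ≤ q) (x : ℕ) :
    qWeight q x = x % q + qWeight q (x / q) := by
  rcases Nat.eq_zero_or_pos x with rfl | hx
  · simp [qWeight]
  · unfold qWeight
    rw [Nat.digits_def' (by omega : 1 < q) hx]
    simp

lemma qWeight_of_lt {q : ℕ} (hq : 2 ≤ q) {a : ℕ} (ha : a < q) : qWeight q a = a := by
  rw [qWeight_eq' hq, Nat.mod_eq_of_lt ha, Nat.div_eq_of_lt ha]
  simp [qWeight]

lemma qWeight_pow_mul_add {q : ℕ} (hq : 2 ≤ q) :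
    ∀ (t a b : ℕ), b < q ^ t → qWeight q (q ^ t * a + b) = qWeight q a + qWeight q b := by
  intro t
  induction t with
  | zero =>
    intro a b hb
    have : b = 0 := by simpa using hb
    subst this; simp [qWeight]
  | succ t ih =>
    intro a b hb
    rw [qWeight_eq' hq (q ^ (t+1) * a + b), qWeight_eq' hq b]
    have h1 : (q ^ (t+1) * a + b) % q = b % q := by
      rw [pow_succ, mul_comm (q^t) q, mul_assoc, Nat.mul_add_mod]
    have h2 : (q ^ (t+1) * a + b) / q = q ^ t * a + b / q := by
      rw [pow_succ, mul_comm (q^t) q, mul_assoc, Nat.mul_add_div (by omega)]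
    have h3 : b / q < q ^ t := by
      rw [Nat.div_lt_iff_lt_mul (by omega)]
      calc b < q ^ (t+1) := hb
      _ = q ^ t * q := by ring
    rw [h1, h2, ih a (b / q) h3]
    ring

lemma qWeight_compl {q : ℕ} (hq : 2 ≤ q) :
    ∀ (m i : ℕ), i < q ^ m → qWeight q i + qWeight q (q ^ m - 1 - i) = m * (q - 1) := by
  intro m
  induction m with
  | zero =>
    intro i hi
    have : i = 0 := by simpa using hi
    subst this; simp [qWeight]
  | succ m ih =>
    intro i hi
    set r := i % q with hr
    set a := i / q with ha
    have hrq : r < q := Nat.mod_lt _ (by omega)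
    have haq : a < q ^ m := by
      rw [ha, Nat.div_lt_iff_lt_mul (by omega)]
      calc i < q ^ (m+1) := hi
      _ = q ^ m * q := by ring
    have hi_eq : i = q * a + r := by rw [ha, hr]; exact (Nat.div_add_mod i q).symm
    have hP : 1 ≤ q ^ m := Nat.one_le_pow _ _ (by omega)
    have hkey : q ^ (m+1) - 1 - i = q * (q ^ m - 1 - a) + (q - 1 - r) := by
      have e1 : q * (q ^ m - 1 - a) = q * q ^ m - q * 1 - q * a := by
        rw [Nat.mul_sub, Nat.mul_sub]
      have e2 : q ^ (m+1) = q * q ^ m := by ring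
      have h4 : q * a + q ≤ q * q ^ m := by
        calc q * a + q = q * (a + 1) := by ring
        _ ≤ q * q ^ m := Nat.mul_le_mul_left _ (by omega)
      omega
    have hN : qWeight q (q ^ (m+1) - 1 - i) =
        (q - 1 - r) + qWeight q (q ^ m - 1 - a) := by
      rw [hkey, qWeight_eq' hq, Nat.mul_add_mod, Nat.mod_eq_of_lt (by omega),
        Nat.mul_add_div (by omega : 0 < q), Nat.div_eq_of_lt (by omega)]
      simp
    have hwi : qWeight q i = r + qWeight q a := by
      rw [qWeight_eq' hq i, ← hr, ← ha]
    have := ih a haq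
    rw [hwi, hN]
    have h5 : r ≤ q - 1 := by omega
    calc r + qWeight q a + (q - 1 - r + qWeight q (q ^ m - 1 - a))
        = (q - 1) + (qWeight q a + qWeight q (q ^ m - 1 - a)) := by omega
    _ = (q - 1) + m * (q - 1) := by rw [this]
    _ = (m + 1) * (q - 1) := by ring

lemma qWeight_shift {q m : ℕ} (hq : 2 ≤ q) (hm : 1 ≤ m) {k : ℕ}
    (hk1 : 1 ≤ k) (hk2 : k < q ^ m - 1) :
    1 ≤ (q * k) % (q ^ m - 1) ∧ (q * k) % (q ^ m - 1) < q ^ m - 1 ∧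
      qWeight q ((q * k) % (q ^ m - 1)) = qWeight q k := by
  obtain ⟨P, hPdef⟩ : ∃ P, P = q ^ (m - 1) := ⟨_, rfl⟩
  have hqm : q ^ m = P * q := by
    rw [hPdef, ← pow_succ]; congr 1; omega
  have hP : 1 ≤ P := hPdef ▸ Nat.one_le_pow _ _ (by omega)
  obtain ⟨a, b, hbP, hk_eq⟩ : ∃ a b, b < P ∧ k = P * a + b :=
    ⟨k / P, k % P, Nat.mod_lt _ (by omega), (Nat.div_add_mod k P).symm⟩
  rw [hqm] at hk2 ⊢
  have hPa : P * a ≤ k := by omega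
  have haq : a < q := by
    by_contra hc
    have : P * q ≤ P * a := Nat.mul_le_mul_left _ (by omega)
    omega
  have hr_lt : q * b + a < P * q - 1 := by
    rcases Nat.lt_or_ge b (P - 1) with hblt | hbge
    · have h1 : q * (b + 1) ≤ q * (P - 1) := Nat.mul_le_mul_left _ (by omega)
      have h2 : q * (b + 1) = q * b + q := by ring
      have h3 : q * (P - 1) = q * P - q := by rw [Nat.mul_sub, Nat.mul_one]
      have h4 : q * P = P * q := mul_comm _ _
      have h5 : q ≤ q * P := Nat.le_mul_of_pos_right q (by omega)
      omega
    · have hb : b = P - 1 := by omega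
      have ha' : a < q - 1 := by
        by_contra hc
        have ha2 : a = q - 1 := by omega
        have : k = P * q - 1 := by
          rw [hk_eq, ha2, hb, Nat.mul_sub, Nat.mul_one]
          have : P ≤ P * q := Nat.le_mul_of_pos_right P (by omega)
          omega
        omega
      have h1 : q * b = q * P - q := by rw [hb, Nat.mul_sub, Nat.mul_one]
      have h4 : q * P = P * q := mul_comm _ _
      have h5 : q ≤ q * P := Nat.le_mul_of_pos_right q (by omega)
      omega
  have hqk : q * k = (P * q - 1) * a + (q * b + a) := by
    have h1 : q * k = P * q * a + q * b := by rw [hk_eq]; ring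
    have h2 : (P * q - 1) * a + a = P * q * a := by
      rw [Nat.sub_mul, Nat.one_mul]
      have h3 : a ≤ P * q * a := le_mul_of_one_le_left (Nat.zero_le _) (by nlinarith)
      omega
    omega
  have hmod : (q * k) % (P * q - 1) = q * b + a := by
    rw [hqk, Nat.add_comm, Nat.add_mul_mod_self_left, Nat.mod_eq_of_lt hr_lt]
  refine ⟨?_, by rw [hmod]; exact hr_lt, ?_⟩
  · rw [hmod]
    rcases Nat.eq_zero_or_pos (q * b + a) with h0 | h0
    · exfalso
      have hqb : q * b = 0 ∧ a = 0 := by omega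
      have hb0 : b = 0 := by
        rcases Nat.mul_eq_zero.mp hqb.1 with h | h
        · omega
        · exact h
      rw [hk_eq, hb0, hqb.2] at hk1; simp at hk1
    · exact h0
  · rw [hmod]
    have h1 : qWeight q (q * b + a) = a + qWeight q b := by
      rw [qWeight_eq' hq, Nat.mul_add_mod, Nat.mod_eq_of_lt haq,
        Nat.mul_add_div (by omega : 0 < q), Nat.div_eq_of_lt haq]
      simp [Nat.add_comm]
    have h2 : qWeight q k = qWeight q a + qWeight q b := by
      rw [hk_eq, hPdef]
      exact qWeight_pow_mul_add hq _ _ _ (hPdef ▸ hbP)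
    rw [h1, h2, qWeight_of_lt hq haq]

lemma Tcard {q m : ℕ} (hq : 2 ≤ q) (hqe : q % 2 = 0) (hmo : m % 2 = 1) {j : ℕ} (hj : j ≤ 1) :
    ((Finset.Icc 1 (q ^ m - 2)).filter (fun i => qWeight q i % 2 = j)).card
      = (q ^ m - 2) / 2 := by
  have hm1 : 1 ≤ m := by omega
  have hqm2 : 2 ≤ q ^ m := le_trans hq (Nat.le_self_pow (by omega) q)
  have hqme : q ^ m % 2 = 0 := by
    have : (2 : ℕ) ∣ q := by omega
    have h2 : (2 : ℕ) ∣ q ^ m := dvd_pow this (by omega)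
    omega
  have hflip : ∀ i, 1 ≤ i → i ≤ q ^ m - 2 →
      (1 ≤ q ^ m - 1 - i ∧ q ^ m - 1 - i ≤ q ^ m - 2 ∧
        qWeight q (q ^ m - 1 - i) % 2 = (1 + qWeight q i) % 2) := by
    intro i h1 h2
    refine ⟨by omega, by omega, ?_⟩
    have hc := qWeight_compl hq m i (by omega)
    have hodd : (m * (q - 1)) % 2 = 1 := by
      rw [Nat.mul_mod, hmo, (by omega : (q - 1) % 2 = 1)]
    omega
  have hkey : ∀ j' : ℕ, j' ≤ 1 →
      ((Finset.Icc 1 (q ^ m - 2)).filter (fun i => qWeight q i % 2 = j')).card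
        = ((Finset.Icc 1 (q ^ m - 2)).filter (fun i => qWeight q i % 2 = 1 - j')).card := by
    intro j' hj'
    apply Finset.card_nbij' (fun i => q ^ m - 1 - i) (fun i => q ^ m - 1 - i)
    · intro a ha
      simp only [Finset.mem_coe, Finset.mem_filter, Finset.mem_Icc] at ha ⊢
      obtain ⟨⟨h1, h2⟩, h3⟩ := ha
      obtain ⟨g1, g2, g3⟩ := hflip a h1 h2
      refine ⟨⟨g1, g2⟩, by omega⟩
    · intro a ha
      simp only [Finset.mem_coe, Finset.mem_filter, Finset.mem_Icc] at ha ⊢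
      obtain ⟨⟨h1, h2⟩, h3⟩ := ha
      obtain ⟨g1, g2, g3⟩ := hflip a h1 h2
      refine ⟨⟨g1, g2⟩, by omega⟩
    · intro a ha
      simp only [Finset.mem_coe, Finset.mem_filter, Finset.mem_Icc] at ha
      dsimp only
      omega
    · intro a ha
      simp only [Finset.mem_coe, Finset.mem_filter, Finset.mem_Icc] at ha
      dsimp only
      omega
  have hsplit : ((Finset.Icc 1 (q ^ m - 2)).filter (fun i => qWeight q i % 2 = j)).card
      + ((Finset.Icc 1 (q ^ m - 2)).filter (fun i => qWeight q i % 2 = 1 - j)).card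
      = q ^ m - 2 := by
    have hcongr : (Finset.Icc 1 (q ^ m - 2)).filter (fun i => qWeight q i % 2 = 1 - j)
        = (Finset.Icc 1 (q ^ m - 2)).filter (fun i => ¬ (qWeight q i % 2 = j)) := by
      apply Finset.filter_congr
      intro x hx
      constructor <;> intro h <;> omega
    rw [hcongr, Finset.card_filter_add_card_filter_not, Nat.card_Icc]
    omega
  have := hkey j hj
  omega

lemma coeff_sum_C_mul_X_pow {F : Type*} [Semiring F] (N : ℕ) (c : Fin N → F) (t : ℕ) :
    (∑ j : Fin N, Polynomial.C (c j) * Polynomial.X ^ (j : ℕ)).coeff t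
      = if h : t < N then c ⟨t, h⟩ else 0 := by
  rw [Polynomial.finset_sum_coeff]
  simp only [Polynomial.coeff_C_mul, Polynomial.coeff_X_pow, mul_ite, mul_one, mul_zero]
  split
  · next h =>
    rw [Finset.sum_eq_single (⟨t, h⟩ : Fin N)]
    · simp
    · intro b _ hb
      simp only [ite_eq_right_iff]
      intro hbt
      exact absurd (Fin.ext hbt.symm) hb
    · intro habs
      exact absurd (Finset.mem_univ _) habs
  · next h =>
    apply Finset.sum_eq_zero
    intro b _
    simp only [ite_eq_right_iff]
    intro hbt
    omega

lemma fixed_mem_range {F E : Type*} [Field F] [Fintype F] [Field E] [Fintype E] [Algebra F E]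
    {q : ℕ} (hq : 2 ≤ q) (hF : Fintype.card F = q) {x : E} (hx : x ^ q = x) :
    ∃ y : F, algebraMap F E y = x := by
  classical
  set A : Finset E := Finset.univ.image (algebraMap F E) with hA
  set P : Polynomial E := Polynomial.X ^ q - Polynomial.X with hPdef
  have hPm : P.Monic := by
    apply Polynomial.monic_X_pow_sub
    calc (Polynomial.X : Polynomial E).degree ≤ 1 := Polynomial.degree_X_le
    _ < (q : WithBot ℕ) := by exact_mod_cast (by omega : 1 < q)
  have hPne : P ≠ 0 := hPm.ne_zero
  have hroot : ∀ z : E, z ^ q = z → z ∈ P.roots.toFinset := by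
    intro z hz
    rw [Multiset.mem_toFinset, Polynomial.mem_roots hPne]
    simp [hPdef, Polynomial.IsRoot, hz]
  have hsub : A ⊆ P.roots.toFinset := by
    intro z hz
    rw [hA, Finset.mem_image] at hz
    obtain ⟨y, _, rfl⟩ := hz
    apply hroot
    rw [← map_pow]
    congr 1
    rw [← hF]
    exact FiniteField.pow_card y
  have hcardA : A.card = q := by
    rw [hA, Finset.card_image_of_injective _ (algebraMap F E).injective, Finset.card_univ, hF]
  have hcardR : P.roots.toFinset.card ≤ q := by
    calc P.roots.toFinset.card ≤ Multiset.card P.roots := Multiset.toFinset_card_le _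
    _ ≤ P.natDegree := Polynomial.card_roots' P
    _ ≤ q := by
        rw [hPdef]
        calc (Polynomial.X ^ q - Polynomial.X : Polynomial E).natDegree
            ≤ max (Polynomial.X ^ q : Polynomial E).natDegree
              (Polynomial.X : Polynomial E).natDegree := Polynomial.natDegree_sub_le _ _
        _ ≤ q := by simp [Polynomial.natDegree_X_pow]; omega
  have hAeq : A = P.roots.toFinset :=
    Finset.eq_of_subset_of_card_le hsub (by omega)
  have hxA : x ∈ A := by
    rw [hAeq]; exact hroot x hx
  rw [hA, Finset.mem_image] at hxA
  obtain ⟨y, _, hy⟩ := hxA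
  exact ⟨y, hy⟩

lemma sum_pow_orth {E : Type*} [Field E] {β : E} {n : ℕ} (hn : 0 < n) (hβn : β ^ n = 1)
    (hinj : ∀ a b : ℕ, a < n → b < n → β ^ a = β ^ b → a = b)
    {j j' : ℕ} (hj : j < n) (hj' : j' < n) :
    ∑ k ∈ Finset.range n, β ^ (k * j) * β ^ ((n - k) * j') = if j = j' then (n : E) else 0 := by
  have hrw : ∀ k ∈ Finset.range n,
      β ^ (k * j) * β ^ ((n - k) * j') = (β ^ j') * ((β ^ j) ^ k * (β ^ j') ^ (n - 1 - k)) := by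
    intro k hk
    rw [Finset.mem_range] at hk
    have h1 : β ^ (k * j) = (β ^ j) ^ k := by rw [← pow_mul, mul_comm]
    have h2 : β ^ ((n - k) * j') = (β ^ j') ^ (n - k) := by rw [← pow_mul, mul_comm]
    have h3 : n - k = (n - 1 - k) + 1 := by omega
    rw [h1, h2, h3, pow_succ]
    ring
  rw [Finset.sum_congr rfl hrw, ← Finset.mul_sum]
  have hgn : ∀ t : ℕ, (β ^ t) ^ n = 1 := by
    intro t
    rw [← pow_mul, mul_comm, pow_mul, hβn, one_pow]
  by_cases hjj : j = j'
  · subst hjj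
    simp only [if_pos rfl]
    have : ∀ k ∈ Finset.range n, (β ^ j) ^ k * (β ^ j) ^ (n - 1 - k) = (β ^ j) ^ (n - 1) := by
      intro k hk
      rw [Finset.mem_range] at hk
      rw [← pow_add]
      congr 1
      omega
    rw [Finset.sum_congr rfl this, Finset.sum_const, Finset.card_range, nsmul_eq_mul]
    have hpow : β ^ j * (β ^ j) ^ (n - 1) = 1 := by
      have h4 : (β ^ j) ^ ((n - 1) + 1) = β ^ j * (β ^ j) ^ (n - 1) := by
        rw [pow_succ]; ring
      rw [← h4, (by omega : n - 1 + 1 = n), hgn]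
    calc β ^ j * ((n : E) * (β ^ j) ^ (n - 1)) = (n : E) * (β ^ j * (β ^ j) ^ (n - 1)) := by ring
    _ = (n : E) := by rw [hpow, mul_one]
  · rw [if_neg hjj]
    have hne : β ^ j - β ^ j' ≠ 0 := by
      intro hc
      exact hjj (hinj j j' hj hj' (sub_eq_zero.mp hc))
    have hgeom := geom_sum₂_mul (β ^ j) (β ^ j') n
    rw [hgn j, hgn j', sub_self] at hgeom
    have hzero : ∑ i ∈ Finset.range n, (β ^ j) ^ i * (β ^ j') ^ (n - 1 - i) = 0 := by
      rcases mul_eq_zero.mp hgeom with h | h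
      · exact h
      · exact absurd h hne
    rw [hzero, mul_zero]

end AuxLemmas

theorem stmt16 (s q m n : ℕ) (hs : 1 ≤ s) (hq : q = 2 ^ s)
    (hm : 3 ≤ m) (hmodd : Odd m) (hn : n = q ^ m - 1)
    (F E : Type*) [Field F] [Fintype F] [DecidableEq F] [Field E] [Fintype E] [Algebra F E]
    (hF : Fintype.card F = q) (hE : Fintype.card E = q ^ m)
    (β : E) (hβ : orderOf β = n) :
    ∀ j : ℕ, j = 0 ∨ j = 1 →
      (cyclicCode F E n β (Tset q m j ∪ {0}) : Set (Fin n → F)) ⊆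
          dualSet (cyclicCode F E n β (Tset q m j ∪ {0}) : Set (Fin n → F)) ∧
        Module.finrank F (cyclicCode F E n β (Tset q m j ∪ {0})) = (n - 1) / 2 := by
  intro j hj
  classical
  -- numeric facts
  have hq2 : 2 ≤ q := by
    rw [hq]
    calc (2:ℕ) = 2 ^ 1 := rfl
    _ ≤ 2 ^ s := Nat.pow_le_pow_right (by norm_num) hs
  have hm1 : 1 ≤ m := by omega
  have hqdvd : (2:ℕ) ∣ q := by rw [hq]; exact dvd_pow_self 2 (by omega)
  have hqe : q % 2 = 0 := by omega
  have hqm8 : 8 ≤ q ^ m := by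
    calc (8:ℕ) = 2 ^ 3 := rfl
    _ ≤ q ^ 3 := Nat.pow_le_pow_left hq2 3
    _ ≤ q ^ m := Nat.pow_le_pow_right (by omega) hm
  have hqme : q ^ m % 2 = 0 := by
    have h2 : (2 : ℕ) ∣ q ^ m := dvd_pow hqdvd (by omega)
    omega
  have hn7 : 7 ≤ n := by omega
  have hnodd : n % 2 = 1 := by omega
  have hj1 : j ≤ 1 := by omega
  set d : ℕ := (n - 1) / 2 with hd
  have hnd : n = 2 * d + 1 := by omega
  have hd3 : 3 ≤ d := by omega
  -- β facts
  have hn0 : 0 < n := by omega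
  have hβn : β ^ n = 1 := by rw [← hβ]; exact pow_orderOf_eq_one β
  have hβ0 : β ≠ 0 := by
    intro h
    rw [h, zero_pow (by omega)] at hβn
    exact zero_ne_one hβn
  have hβinj : ∀ a b : ℕ, a < n → b < n → β ^ a = β ^ b → a = b := by
    have key : ∀ a b : ℕ, a < n → b < n → a ≤ b → β ^ a = β ^ b → a = b := by
      intro a b ha hb hab heq
      have h1 : β ^ a * β ^ (b - a) = β ^ a * 1 := by
        rw [mul_one, ← pow_add, (by omega : a + (b - a) = b)]
        exact heq.symm
      have h2 : β ^ (b - a) = 1 := mul_left_cancel₀ (pow_ne_zero _ hβ0) h1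
      have h3 : orderOf β ∣ (b - a) := orderOf_dvd_of_pow_eq_one h2
      rw [hβ] at h3
      have h4 : b - a = 0 := by
        rcases Nat.eq_zero_or_pos (b - a) with h | h
        · exact h
        · exact absurd (Nat.le_of_dvd h h3) (by omega)
      omega
    intro a b ha hb heq
    rcases le_or_gt a b with h | h
    · exact key a b ha hb h heq
    · exact (key b a hb ha (by omega) heq.symm).symm
  have hβmod : ∀ k : ℕ, β ^ (k % n) = β ^ k := by
    intro k
    rw [← hβ]
    exact pow_mod_orderOf β k
  -- characteristic 2
  haveI hp2 : Fact (Nat.Prime 2) := ⟨Nat.prime_two⟩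
  have hcharE : ringChar E = 2 := by
    obtain ⟨k, hkp, hcard⟩ := FiniteField.card E (ringChar E)
    have h2 : Fintype.card E = 2 ^ (s * m) := by rw [hE, hq, ← pow_mul]
    have hdvd : ringChar E ∣ 2 ^ (s * m) := by
      rw [← h2, hcard]
      exact dvd_pow_self _ (by positivity)
    have h3 : ringChar E ∣ 2 := hkp.dvd_of_dvd_pow hdvd
    exact (Nat.prime_dvd_prime_iff_eq hkp Nat.prime_two).mp h3
  haveI hchar2 : CharP E 2 := by rw [← hcharE]; exact ringChar.charP E
  haveI hexp2 : ExpChar E 2 := ExpChar.prime Nat.prime_two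
  -- the defining finset
  set Tf : Finset ℕ := (Finset.Icc 1 (n - 1)).filter (fun i => qWeight q i % 2 = j) with hTf
  set Sf : Finset ℕ := insert 0 Tf with hSf
  have hTmem : ∀ k : ℕ, k ∈ Tf ↔ (1 ≤ k ∧ k ≤ n - 1 ∧ qWeight q k % 2 = j) := by
    intro k
    rw [hTf, Finset.mem_filter, Finset.mem_Icc]
    tauto
  have hTset_eq : ∀ k : ℕ, (k ∈ Tset q m j ∪ {0}) ↔ k ∈ Sf := by
    intro k
    rw [hSf, Finset.mem_insert, hTmem]
    simp only [Set.mem_union, Set.mem_singleton_iff, Tset, Set.mem_setOf_eq]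
    constructor
    · rintro (⟨h1, h2, h3⟩ | h)
      · right; exact ⟨h1, by omega, h3⟩
      · left; exact h
    · rintro (h | ⟨h1, h2, h3⟩)
      · right; exact h
      · left; exact ⟨h1, by omega, h3⟩
  have hT0 : (0:ℕ) ∉ Tf := by
    rw [hTmem]; omega
  have hScard : Sf.card = d + 1 := by
    rw [hSf, Finset.card_insert_of_notMem hT0, hTf]
    have he : n - 1 = q ^ m - 2 := by omega
    rw [he]
    rw [Tcard hq2 (by omega) (Nat.odd_iff.mp hmodd) hj1, ← he]
  have hSlt : ∀ k ∈ Sf, k < n := by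
    intro k hk
    rw [hSf, Finset.mem_insert, hTmem] at hk
    omega
  have hSshift : ∀ k ∈ Sf, (q * k) % n ∈ Sf := by
    intro k hk
    rw [hSf, Finset.mem_insert, hTmem] at hk
    rcases hk with rfl | ⟨h1, h2, h3⟩
    · rw [hSf, Finset.mem_insert]
      left
      simp
    · obtain ⟨g1, g2, g3⟩ := qWeight_shift hq2 hm1 h1 (by omega : k < q ^ m - 1)
      rw [← hn] at g1 g2 g3
      rw [hSf, Finset.mem_insert, hTmem]
      right
      exact ⟨g1, by omega, by rw [g3]; exact h3⟩
  have hinjq : Set.InjOn (fun k => (q * k) % n) ↑Sf := by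
    intro a ha b hb hab
    have ha' := hSlt a ha
    have hb' := hSlt b hb
    have hco : Nat.gcd n q = 1 := by
      have h2 : Nat.Coprime n 2 :=
        ((Nat.Prime.coprime_iff_not_dvd Nat.prime_two).mpr (by omega)).symm
      rw [hq]
      exact Nat.Coprime.pow_right _ h2
    have hmodeq : q * a ≡ q * b [MOD n] := hab
    have h3 : a ≡ b [MOD n] := Nat.ModEq.cancel_left_of_coprime hco hmodeq
    have h4 : a % n = b % n := h3
    rw [Nat.mod_eq_of_lt ha', Nat.mod_eq_of_lt hb'] at h4
    exact h4
  have himg : Finset.image (fun k => (q * k) % n) Sf = Sf := by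
    apply Finset.eq_of_subset_of_card_le
    · intro x hx
      rw [Finset.mem_image] at hx
      obtain ⟨k, hk, rfl⟩ := hx
      exact hSshift k hk
    · rw [Finset.card_image_of_injOn hinjq]
  -- Frobenius
  set φ : E →+* E := iterateFrobenius E 2 s with hφdef
  have hφ : ∀ x : E, φ x = x ^ q := by
    intro x
    rw [hφdef, iterateFrobenius_def, hq]
  -- the polynomial g
  set g : Polynomial E := ∏ k ∈ Sf, (Polynomial.X - Polynomial.C (β ^ k)) with hgdef
  have hgmonic : g.Monic := Polynomial.monic_prod_of_monic _ _ (fun k _ => Polynomial.monic_X_sub_C _)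
  have hgdeg : g.natDegree = d + 1 := by
    rw [hgdef, Polynomial.natDegree_prod _ _ (fun k _ => Polynomial.X_sub_C_ne_zero _)]
    simp only [Polynomial.natDegree_X_sub_C]
    rw [Finset.sum_const, hScard, smul_eq_mul, mul_one]
  have hφβ : ∀ k : ℕ, φ (β ^ k) = β ^ ((q * k) % n) := by
    intro k
    rw [hφ, ← pow_mul, mul_comm k q, hβmod]
  have hgmap : g.map φ = g := by
    calc g.map φ = ∏ k ∈ Sf, (Polynomial.X - Polynomial.C (β ^ ((q * k) % n))) := by
          rw [hgdef, Polynomial.map_prod]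
          apply Finset.prod_congr rfl
          intro k _
          rw [Polynomial.map_sub, Polynomial.map_X, Polynomial.map_C, hφβ]
    _ = ∏ k ∈ Finset.image (fun k => (q * k) % n) Sf, (Polynomial.X - Polynomial.C (β ^ k)) := by
          rw [Finset.prod_image (fun a ha b hb hab => hinjq ha hb hab)]
    _ = g := by rw [himg, hgdef]
  -- g has coefficients in F
  have hlift : g ∈ Polynomial.lifts (algebraMap F E) := by
    rw [Polynomial.lifts_iff_coeff_lifts]
    intro t
    have hfix : (g.coeff t) ^ q = g.coeff t := by
      have h1 : (g.map φ).coeff t = φ (g.coeff t) := Polynomial.coeff_map _ _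
      rw [hgmap] at h1
      rw [← hφ]
      exact h1.symm
    obtain ⟨y, hy⟩ := fixed_mem_range hq2 hF hfix
    exact ⟨y, hy⟩
  obtain ⟨g₀, hg₀map, hg₀deg⟩ := Polynomial.mem_lifts_and_degree_eq hlift
  have hg₀ne : g₀ ≠ 0 := by
    intro h0
    rw [h0, Polynomial.map_zero] at hg₀map
    exact hgmonic.ne_zero hg₀map.symm
  have hg₀deg' : g₀.natDegree = d + 1 := by
    rw [← hgdeg]
    exact Polynomial.natDegree_eq_of_degree_eq hg₀deg
  -- coefficient polynomials
  set pc : (Fin n → F) → Polynomial F :=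
    fun c => ∑ jj : Fin n, Polynomial.C (c jj) * Polynomial.X ^ (jj : ℕ) with hpcdef
  have hpc_coeff : ∀ (c : Fin n → F) (t : ℕ),
      (pc c).coeff t = if h : t < n then c ⟨t, h⟩ else 0 := by
    intro c t
    rw [hpcdef]
    exact coeff_sum_C_mul_X_pow n c t
  have haeval : ∀ (c : Fin n → F) (k : ℕ),
      (Polynomial.aeval (β ^ k)) (pc c) = ∑ jj : Fin n, algebraMap F E (c jj) * β ^ (k * (jj : ℕ)) := by
    intro c k
    rw [hpcdef, map_sum]
    apply Finset.sum_congr rfl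
    intro jj _
    rw [map_mul, Polynomial.aeval_C, map_pow, Polynomial.aeval_X, ← pow_mul]
  -- membership characterization
  have hmem : ∀ c : Fin n → F,
      (c ∈ cyclicCode F E n β (Tset q m j ∪ {0}) ↔ g₀ ∣ pc c) := by
    intro c
    constructor
    · intro hc
      have hc' : ∀ k ∈ Tset q m j ∪ {0},
          ∑ jj : Fin n, algebraMap F E (c jj) * β ^ (k * (jj : ℕ)) = 0 := hc
      have hroots : ∀ k ∈ Sf, ((pc c).map (algebraMap F E)).eval (β ^ k) = 0 := by
        intro k hk
        rw [Polynomial.eval_map, ← Polynomial.aeval_def, haeval]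
        exact hc' k ((hTset_eq k).mpr hk)
      by_cases hzero : (pc c).map (algebraMap F E) = 0
      · have hz : pc c = 0 :=
          Polynomial.map_injective _ (algebraMap F E).injective
            (by rw [hzero, Polynomial.map_zero])
        rw [hz]
        exact dvd_zero _
      · have hM : (Sf.val.map (fun k => β ^ k)).Nodup := by
          apply Multiset.Nodup.map_on
          · intro a ha b hb hab
            exact hβinj a b (hSlt a ha) (hSlt b hb) hab
          · exact Sf.nodup
        have hle : (Sf.val.map (fun k => β ^ k)) ≤ ((pc c).map (algebraMap F E)).roots := by
          rw [Multiset.le_iff_subset hM]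
          intro r hr
          rw [Multiset.mem_map] at hr
          obtain ⟨k, hk, rfl⟩ := hr
          rw [Polynomial.mem_roots hzero]
          exact hroots k hk
        have hdvd : g ∣ (pc c).map (algebraMap F E) := by
          have h1 : g = ((Sf.val.map (fun k => β ^ k)).map
              (fun r => Polynomial.X - Polynomial.C r)).prod := by
            rw [Multiset.map_map, hgdef, Finset.prod]
            rfl
          rw [h1]
          exact dvd_trans (Multiset.prod_dvd_prod_of_le (Multiset.map_le_map hle))
            (Polynomial.prod_multiset_X_sub_C_dvd _)
        rw [← hg₀map] at hdvd
        exact (Polynomial.map_dvd_map' (algebraMap F E)).mp hdvd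
    · intro hdvd k hk
      have hk' : k ∈ Sf := (hTset_eq k).mp hk
      rw [← haeval c k, Polynomial.aeval_def, ← Polynomial.eval_map]
      obtain ⟨u, hu⟩ := hdvd
      rw [hu, Polynomial.map_mul, hg₀map, Polynomial.eval_mul]
      have hgz : g.eval (β ^ k) = 0 := by
        have hfac : (Polynomial.X - Polynomial.C (β ^ k)) ∣ g :=
          Finset.dvd_prod_of_mem _ hk'
        obtain ⟨w, hw⟩ := hfac
        rw [hw, Polynomial.eval_mul]
        simp
      rw [hgz, zero_mul]
  -- the degree-bounded polynomials
  set ph : (Fin d → F) → Polynomial F :=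
    fun h => ∑ t : Fin d, Polynomial.C (h t) * Polynomial.X ^ (t : ℕ) with hphdef
  have hph_coeff : ∀ (h : Fin d → F) (t : ℕ),
      (ph h).coeff t = if ht : t < d then h ⟨t, ht⟩ else 0 := by
    intro h t
    rw [hphdef]
    exact coeff_sum_C_mul_X_pow d h t
  have hph_deg : ∀ h, (ph h).natDegree ≤ d - 1 := by
    intro h
    rw [hphdef]
    apply Polynomial.natDegree_sum_le_of_forall_le
    intro t _
    calc (Polynomial.C (h t) * Polynomial.X ^ (t:ℕ)).natDegree
        ≤ (Polynomial.X ^ (t:ℕ) : Polynomial F).natDegree := Polynomial.natDegree_C_mul_le _ _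
    _ ≤ d - 1 := by
        rw [Polynomial.natDegree_X_pow]
        omega
  have hmul_deg : ∀ h : Fin d → F, (g₀ * ph h).natDegree < n := by
    intro h
    calc (g₀ * ph h).natDegree ≤ g₀.natDegree + (ph h).natDegree :=
        Polynomial.natDegree_mul_le
    _ ≤ (d + 1) + (d - 1) := by
        rw [hg₀deg']
        exact Nat.add_le_add_left (hph_deg h) _
    _ < n := by omega
  have hph_add : ∀ a b : Fin d → F, ph (a + b) = ph a + ph b := by
    intro a b
    rw [hphdef, ← Finset.sum_add_distrib]
    apply Finset.sum_congr rfl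
    intro x _
    simp only [Pi.add_apply, map_add, add_mul]
  have hph_smul : ∀ (r : F) (a : Fin d → F), ph (r • a) = Polynomial.C r * ph a := by
    intro r a
    rw [hphdef, Finset.mul_sum]
    apply Finset.sum_congr rfl
    intro x _
    simp only [Pi.smul_apply, smul_eq_mul, map_mul, mul_assoc]
  set Φ : (Fin d → F) →ₗ[F] (Fin n → F) :=
    { toFun := fun h t => (g₀ * ph h).coeff (t : ℕ)
      map_add' := by
        intro a b
        funext t
        change (g₀ * ph (a + b)).coeff (t:ℕ) = (g₀ * ph a).coeff (t:ℕ) + (g₀ * ph b).coeff (t:ℕ)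
        rw [hph_add, mul_add, Polynomial.coeff_add]
      map_smul' := by
        intro r a
        funext t
        change (g₀ * ph (r • a)).coeff (t:ℕ) = r * (g₀ * ph a).coeff (t:ℕ)
        rw [hph_smul]
        have h2 : g₀ * (Polynomial.C r * ph a) = Polynomial.C r * (g₀ * ph a) := by ring
        rw [h2, Polynomial.coeff_C_mul] } with hΦdef
  have hΦ_apply : ∀ (h : Fin d → F) (t : Fin n), Φ h t = (g₀ * ph h).coeff (t : ℕ) := by
    intro h t
    rfl
  have hΦinj : Function.Injective Φ := by
    intro a b hab
    have hmul : g₀ * ph a = g₀ * ph b := by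
      apply Polynomial.ext
      intro t
      by_cases ht : t < n
      · have := congrFun hab (⟨t, ht⟩ : Fin n)
        exact this
      · rw [Polynomial.coeff_eq_zero_of_natDegree_lt (lt_of_lt_of_le (hmul_deg a) (by omega)),
          Polynomial.coeff_eq_zero_of_natDegree_lt (lt_of_lt_of_le (hmul_deg b) (by omega))]
    have hpheq : ph a = ph b := mul_left_cancel₀ hg₀ne hmul
    funext t
    have h1 := congrArg (fun p => Polynomial.coeff p (t : ℕ)) hpheq
    simp only [hph_coeff, t.isLt, dif_pos, Fin.eta] at h1
    exact h1
  have hrange : LinearMap.range Φ = cyclicCode F E n β (Tset q m j ∪ {0}) := by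
    apply le_antisymm
    · rintro c ⟨h, rfl⟩
      rw [hmem]
      have hpc : pc (Φ h) = g₀ * ph h := by
        apply Polynomial.ext
        intro t
        rw [hpc_coeff]
        split
        · next ht => rfl
        · next ht =>
          rw [Polynomial.coeff_eq_zero_of_natDegree_lt (lt_of_lt_of_le (hmul_deg h) (by omega))]
      rw [hpc]
      exact dvd_mul_right _ _
    · intro c hc
      rw [hmem] at hc
      obtain ⟨u, hu⟩ := hc
      have hucoeff : ∀ t : ℕ, d ≤ t → u.coeff t = 0 := by
        intro t ht
        rcases eq_or_ne u 0 with rfl | hune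
        · simp
        · apply Polynomial.coeff_eq_zero_of_natDegree_lt
          have hpcne : pc c ≠ 0 := by
            intro h0
            rw [h0] at hu
            rcases mul_eq_zero.mp hu.symm with h | h
            · exact hg₀ne h
            · exact hune h
          have hdeg_pc : (pc c).natDegree ≤ n - 1 := by
            rw [hpcdef]
            apply Polynomial.natDegree_sum_le_of_forall_le
            intro t' _
            calc (Polynomial.C (c t') * Polynomial.X ^ (t':ℕ)).natDegree
                ≤ (Polynomial.X ^ (t':ℕ) : Polynomial F).natDegree :=
                  Polynomial.natDegree_C_mul_le _ _
            _ ≤ n - 1 := by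
                rw [Polynomial.natDegree_X_pow]
                omega
          have hmul := Polynomial.natDegree_mul hg₀ne hune
          rw [← hu] at hmul
          omega
      refine ⟨fun t : Fin d => u.coeff (t : ℕ), ?_⟩
      have hphu : ph (fun t : Fin d => u.coeff (t : ℕ)) = u := by
        apply Polynomial.ext
        intro t
        rw [hph_coeff]
        split
        · next ht => rfl
        · next ht =>
          exact (hucoeff t (by omega)).symm
      funext t
      rw [hΦ_apply, hphu, ← hu, hpc_coeff]
      rw [dif_pos t.isLt]
  have hfin : Module.finrank F (cyclicCode F E n β (Tset q m j ∪ {0})) = d := by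
    rw [← hrange, LinearMap.finrank_range_of_inj hΦinj, Module.finrank_fin_fun]
  refine ⟨?_, hfin⟩
  -- self-orthogonality
  intro c hc
  intro v hv
  have hc' : ∀ k ∈ Tset q m j ∪ {0},
      ∑ jj : Fin n, algebraMap F E (c jj) * β ^ (k * (jj : ℕ)) = 0 := hc
  have hv' : ∀ k ∈ Tset q m j ∪ {0},
      ∑ jj : Fin n, algebraMap F E (v jj) * β ^ (k * (jj : ℕ)) = 0 := hv
  set A : (Fin n → F) → ℕ → E :=
    fun w k => ∑ jj : Fin n, algebraMap F E (w jj) * β ^ (k * (jj : ℕ)) with hAdef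
  have hAmod : ∀ w k, A w k = A w (k % n) := by
    intro w k
    rw [hAdef]
    apply Finset.sum_congr rfl
    intro jj _
    rw [pow_mul, pow_mul, hβmod]
  have hAc : ∀ k ∈ Sf, A c k = 0 := by
    intro k hk
    exact hc' k ((hTset_eq k).mpr hk)
  have hAv : ∀ k ∈ Sf, A v k = 0 := by
    intro k hk
    exact hv' k ((hTset_eq k).mpr hk)
  have h0S : (0:ℕ) ∈ Sf := by rw [hSf]; exact Finset.mem_insert_self _ _
  have hkey : ∀ k, k < n → A c k * A v (n - k) = 0 := by
    intro k hk
    rcases Nat.eq_zero_or_pos k with rfl | hk1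
    · have : A v (n - 0) = 0 := by
        rw [Nat.sub_zero, hAmod, Nat.mod_self]
        exact hAv 0 h0S
      rw [this, mul_zero]
    · by_cases hwt : qWeight q k % 2 = j
      · have : A c k = 0 := hAc k (by
          rw [hSf, Finset.mem_insert, hTmem]
          right
          exact ⟨hk1, by omega, hwt⟩)
        rw [this, zero_mul]
      · have hcompl := qWeight_compl hq2 m k (by omega : k < q ^ m)
        have hqmk : q ^ m - 1 - k = n - k := by omega
        rw [hqmk] at hcompl
        have hodd : (m * (q - 1)) % 2 = 1 := by
          rw [Nat.mul_mod, Nat.odd_iff.mp hmodd, (by omega : (q - 1) % 2 = 1)]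

        have hwt2 : qWeight q (n - k) % 2 = j := by omega
        have : A v (n - k) = 0 := hAv (n - k) (by
          rw [hSf, Finset.mem_insert, hTmem]
          right
          exact ⟨by omega, by omega, hwt2⟩)
        rw [this, mul_zero]
  have hsum0 : ∑ k ∈ Finset.range n, A c k * A v (n - k) = 0 :=
    Finset.sum_eq_zero (fun k hk => hkey k (Finset.mem_range.mp hk))
  have hexpand : ∑ k ∈ Finset.range n, A c k * A v (n - k)
      = algebraMap F E (∑ t : Fin n, c t * v t) * (n : E) := by
    calc ∑ k ∈ Finset.range n, A c k * A v (n - k)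
        = ∑ k ∈ Finset.range n, ∑ jj : Fin n, ∑ jj' : Fin n,
            (algebraMap F E (c jj) * algebraMap F E (v jj'))
              * (β ^ (k * (jj:ℕ)) * β ^ ((n - k) * (jj':ℕ))) := by
          apply Finset.sum_congr rfl
          intro k _
          rw [hAdef, Finset.sum_mul_sum]
          apply Finset.sum_congr rfl
          intro jj _
          apply Finset.sum_congr rfl
          intro jj' _
          ring
    _ = ∑ jj : Fin n, ∑ jj' : Fin n,
          (algebraMap F E (c jj) * algebraMap F E (v jj'))
            * ∑ k ∈ Finset.range n, β ^ (k * (jj:ℕ)) * β ^ ((n - k) * (jj':ℕ)) := by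
          rw [Finset.sum_comm]
          apply Finset.sum_congr rfl
          intro jj _
          rw [Finset.sum_comm]
          apply Finset.sum_congr rfl
          intro jj' _
          rw [← Finset.mul_sum]
    _ = ∑ jj : Fin n, (algebraMap F E (c jj) * algebraMap F E (v jj)) * (n : E) := by
          apply Finset.sum_congr rfl
          intro jj _
          have hterm : ∀ jj' : Fin n,
              (algebraMap F E (c jj) * algebraMap F E (v jj'))
                * (∑ k ∈ Finset.range n, β ^ (k * (jj:ℕ)) * β ^ ((n - k) * (jj':ℕ)))
              = if jj' = jj then (algebraMap F E (c jj) * algebraMap F E (v jj)) * (n : E)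
                else 0 := by
            intro jj'
            rw [sum_pow_orth hn0 hβn hβinj jj.isLt jj'.isLt]
            by_cases h : (jj:ℕ) = (jj':ℕ)
            · have heq : jj' = jj := Fin.ext h.symm
              subst heq
              simp
            · rw [if_neg h, if_neg (fun hcon => h (by rw [hcon])), mul_zero]
          rw [Finset.sum_congr rfl (fun jj' _ => hterm jj')]
          rw [Finset.sum_ite_eq' Finset.univ jj
            (fun _ => (algebraMap F E (c jj) * algebraMap F E (v jj)) * (n : E))]
          simp
    _ = algebraMap F E (∑ t : Fin n, c t * v t) * (n : E) := by
          rw [map_sum, Finset.sum_mul]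
          apply Finset.sum_congr rfl
          intro t _
          rw [map_mul]
  have hnE : ((n:ℕ) : E) = 1 := by
    have h2 : ((2:ℕ) : E) = 0 := CharP.cast_eq_zero E 2
    have h3 : (n : ℕ) = 2 * (n / 2) + 1 := by omega
    rw [h3]
    push_cast
    rw [(by exact_mod_cast h2 : (2 : E) = 0), zero_mul, zero_add]
  rw [hexpand, hnE, mul_one] at hsum0
  apply (algebraMap F E).injective
  rw [map_zero]
  exact hsum0
end
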